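/- Privacy amplification by Poisson subsampling (remove/add version on event level upper bounds): let M be ε-DP and let Sample_γ denote Poisson subsampling with rate γ ∈ [0,1]. If for neighboring D₀, D₁ (D₁ = D₀ with one extra record) and any event R' we write p = P[(M ∘ Sample_γ)(D₀) ∈ R'] and q = P[(M ∘ Sample_γ)(D₁) ∈ R'], then q ≤ (1−γ)p + γ e^ε p = (1 + γ(e^ε − 1)) p, so M ∘ Sample_γ is log(1 + γ(e^ε−1))-DP in this direction. -/
import Mathlib


/-- Privacy amplification by Poisson subsampling (add-one direction): let
`Sample` be Poisson subsampling with rate `γ` (each record of the dataset is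
kept independently with probability `γ`), and let `M` be `ε`-DP under
add/remove-one-record neighboring. Then for neighboring datasets
`D₀` and `D₁ = insert x D₀`, and any event `S`,
`P[(M ∘ Sample)(D₁) ∈ S] ≤ (1 + γ(e^ε − 1)) · P[(M ∘ Sample)(D₀) ∈ S]`,
i.e. `M ∘ Sample` is `log(1 + γ(e^ε−1))`-DP in this direction. -/
theorem poisson_subsampling_amplification {X R : Type*} [DecidableEq X]
    (γ ε : ℝ) (h0 : 0 ≤ γ) (h1 : γ ≤ 1) (hε : 0 ≤ ε)
    (Sample : Finset X → PMF (Finset X))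
    (hSample : ∀ D s, Sample D s =
      if s ⊆ D then ENNReal.ofReal (γ ^ s.card * (1 - γ) ^ (D.card - s.card))
      else 0)
    (M : Finset X → PMF R)
    (hM : ∀ (s : Finset X) (x : X), x ∉ s → ∀ S : Set R,
      (M (insert x s)).toOuterMeasure S ≤
          ENNReal.ofReal (Real.exp ε) * (M s).toOuterMeasure S ∧
      (M s).toOuterMeasure S ≤
          ENNReal.ofReal (Real.exp ε) * (M (insert x s)).toOuterMeasure S) :
    ∀ (D₀ : Finset X) (x : X), x ∉ D₀ → ∀ S : Set R,
      (((Sample (insert x D₀)).bind M).toOuterMeasure S) ≤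
        ENNReal.ofReal (1 + γ * (Real.exp ε - 1)) *
          (((Sample D₀).bind M).toOuterMeasure S) := by
  intro D₀ x hx S
  classical
  have h1γ : (0:ℝ) ≤ 1 - γ := by linarith
  have hcard : (insert x D₀).card = D₀.card + 1 := Finset.card_insert_of_notMem hx
  set μ : Finset X → ENNReal := fun s => (M s).toOuterMeasure S with hμ
  have key : ∀ D : Finset X, ((Sample D).bind M).toOuterMeasure S
      = ∑ s ∈ D.powerset, Sample D s * μ s := by
    intro D
    rw [PMF.toOuterMeasure_bind_apply]
    refine (tsum_eq_sum ?_)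
    intro s hs
    rw [hSample, if_neg (by simpa using hs), zero_mul]
  rw [key, key]
  have hdisj : Disjoint D₀.powerset (D₀.powerset.image (insert x)) := by
    rw [Finset.disjoint_left]
    intro a ha hb
    obtain ⟨t, ht, rfl⟩ := Finset.mem_image.mp hb
    exact hx (Finset.mem_powerset.mp ha (Finset.mem_insert_self x t))
  rw [Finset.powerset_insert, Finset.sum_union hdisj]
  have hinj : ∀ s ∈ D₀.powerset, ∀ t ∈ D₀.powerset, insert x s = insert x t → s = t := by
    intro s hs t ht h
    have hxs : x ∉ s := fun h' => hx (Finset.mem_powerset.mp hs h')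
    have hxt : x ∉ t := fun h' => hx (Finset.mem_powerset.mp ht h')
    rw [← Finset.erase_insert hxs, ← Finset.erase_insert hxt, h]
  rw [Finset.sum_image hinj]
  -- bound each part
  have part1 : ∑ s ∈ D₀.powerset, Sample (insert x D₀) s * μ s
      = ENNReal.ofReal (1 - γ) * ∑ s ∈ D₀.powerset, Sample D₀ s * μ s := by
    rw [Finset.mul_sum]
    refine Finset.sum_congr rfl ?_
    intro s hs
    have hsD : s ⊆ D₀ := Finset.mem_powerset.mp hs
    have hsc : s.card ≤ D₀.card := Finset.card_le_card hsD
    rw [hSample, hSample, if_pos hsD, if_pos (hsD.trans (Finset.subset_insert x D₀)),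
      hcard]
    have hexp : D₀.card + 1 - s.card = (D₀.card - s.card) + 1 := by omega
    rw [hexp, pow_succ,
      show γ ^ s.card * ((1 - γ) ^ (D₀.card - s.card) * (1 - γ))
        = (1 - γ) * (γ ^ s.card * (1 - γ) ^ (D₀.card - s.card)) from by ring,
      ENNReal.ofReal_mul h1γ, mul_assoc]
  have part2 : ∑ s ∈ D₀.powerset, Sample (insert x D₀) (insert x s) * μ (insert x s)
      ≤ ENNReal.ofReal (γ * Real.exp ε) * ∑ s ∈ D₀.powerset, Sample D₀ s * μ s := by
    rw [Finset.mul_sum]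
    refine Finset.sum_le_sum ?_
    intro s hs
    have hsD : s ⊆ D₀ := Finset.mem_powerset.mp hs
    have hxs : x ∉ s := fun h' => hx (hsD h')
    have hsc : s.card ≤ D₀.card := Finset.card_le_card hsD
    have hsamp : Sample (insert x D₀) (insert x s)
        = ENNReal.ofReal γ * Sample D₀ s := by
      rw [hSample, hSample, if_pos hsD, if_pos (Finset.insert_subset_insert x hsD),
        hcard, Finset.card_insert_of_notMem hxs]
      have hexp : D₀.card + 1 - (s.card + 1) = D₀.card - s.card := by omega
      rw [hexp, pow_succ,
        show γ ^ s.card * γ * (1 - γ) ^ (D₀.card - s.card)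
          = γ * (γ ^ s.card * (1 - γ) ^ (D₀.card - s.card)) from by ring,
        ENNReal.ofReal_mul h0]
    have hμle : μ (insert x s) ≤ ENNReal.ofReal (Real.exp ε) * μ s := (hM s x hxs S).1
    calc Sample (insert x D₀) (insert x s) * μ (insert x s)
        ≤ ENNReal.ofReal γ * Sample D₀ s * (ENNReal.ofReal (Real.exp ε) * μ s) := by
          rw [hsamp]; exact mul_le_mul_right hμle _
      _ = ENNReal.ofReal (γ * Real.exp ε) * (Sample D₀ s * μ s) := by
          rw [ENNReal.ofReal_mul h0]; ring
  calc _ ≤ ENNReal.ofReal (1 - γ) * ∑ s ∈ D₀.powerset, Sample D₀ s * μ s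
        + ENNReal.ofReal (γ * Real.exp ε) * ∑ s ∈ D₀.powerset, Sample D₀ s * μ s :=
        add_le_add part1.le part2
    _ = ENNReal.ofReal (1 + γ * (Real.exp ε - 1)) *
        ∑ s ∈ D₀.powerset, Sample D₀ s * μ s := by
        rw [← add_mul, ← ENNReal.ofReal_add h1γ (mul_nonneg h0 (Real.exp_nonneg ε))]
        congr 1
        rw [ENNReal.ofReal_eq_ofReal_iff (by positivity)
          (by nlinarith [Real.exp_nonneg ε, Real.one_le_exp hε])]
        ring
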